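/- Let p be a prime and n a natural number. Let K ≤ Σ_n be either Σ_n itself or the stabilizer of a strictly increasing chain λ_0 < … < λ_j of proper nontrivial setoids on Fin n. Let D ≤ K be an elementary abelian p-subgroup that acts freely and not transitively on Fin n, and let C and N be, respectively, the centralizer and the normalizer of D in K. Then either (1) p divides the index [C : D], or (2) p is odd and there exists τ ∈ C with τ ≠ 1, τ² = 1, sign(τ) = -1 (τ is an odd involution), such that τ commutes with every element of N whose order is a power of p. -/

import Mathlib

open Equiv

section Helpers

theorem Equiv.Perm.apply_inv_self {α : Type*} (f : Equiv.Perm α) (x : α) : f (f⁻¹ x) = x :=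
  f.apply_symm_apply x

theorem Equiv.Perm.inv_apply_self {α : Type*} (f : Equiv.Perm α) (x : α) : f⁻¹ (f x) = x :=
  f.symm_apply_apply x

variable {G : Type*} [Group G]

theorem stmt14_closure_comm (S : Set G) (h : ∀ a ∈ S, ∀ b ∈ S, a * b = b * a) :
    ∀ a ∈ Subgroup.closure S, ∀ b ∈ Subgroup.closure S, a * b = b * a := by
  have h1 : ∀ b ∈ S, Subgroup.closure S ≤ Subgroup.centralizer {b} := by
    intro b hb
    refine (Subgroup.closure_le _).mpr (fun s hs => Subgroup.mem_centralizer_iff.mpr ?_)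
    rintro m rfl
    exact (h s hs m hb).symm
  have h2 : ∀ a ∈ Subgroup.closure S, ∀ b ∈ S, a * b = b * a := by
    intro a ha b hb
    exact (Subgroup.mem_centralizer_iff.mp (h1 b hb ha) b rfl).symm
  intro a ha b hb
  have h3 : Subgroup.closure S ≤ Subgroup.centralizer {a} := by
    refine (Subgroup.closure_le _).mpr (fun s hs => Subgroup.mem_centralizer_iff.mpr ?_)
    intro m hm
    have hma : m = a := hm
    rw [hma]
    exact h2 a ha s hs
  exact Subgroup.mem_centralizer_iff.mp (h3 hb) a rfl

theorem stmt14_pgroup_closure {p : ℕ} (S : Set G)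
    (hcomm : ∀ a ∈ S, ∀ b ∈ S, a * b = b * a)
    (hpow : ∀ a ∈ S, ∃ k, a ^ p ^ k = 1) : IsPGroup p (Subgroup.closure S) := by
  have hc := stmt14_closure_comm S hcomm
  have key : ∀ a ∈ Subgroup.closure S, ∃ k, a ^ p ^ k = 1 := by
    intro a ha
    induction ha using Subgroup.closure_induction with
    | mem x hx => exact hpow x hx
    | one => exact ⟨0, by simp⟩
    | mul x y hx hy ihx ihy =>
      obtain ⟨k, hk⟩ := ihx
      obtain ⟨l, hl⟩ := ihy
      refine ⟨k + l, ?_⟩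
      have hxy : Commute x y := hc x hx y hy
      rw [hxy.mul_pow, pow_add, pow_mul, hk, one_pow, one_mul, mul_comm (p ^ k), pow_mul, hl,
        one_pow]
    | inv x hx ih =>
      obtain ⟨k, hk⟩ := ih
      exact ⟨k, by rw [inv_pow, hk, inv_one]⟩
  intro g
  obtain ⟨k, hk⟩ := key g g.2
  exact ⟨k, Subtype.ext (by simpa using hk)⟩

theorem stmt14_dvd_relIndex [Finite G] {p : ℕ} (hp : p.Prime) (D P H : Subgroup G)
    (hDP : D ≤ P) (hPH : P ≤ H) (hne : ¬P ≤ D) (hP : IsPGroup p P) : p ∣ D.relIndex H := by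
  haveI : Fact p.Prime := ⟨hp⟩
  have h1 : D.relIndex P * P.relIndex H = D.relIndex H :=
    Subgroup.relIndex_mul_relIndex D P H hDP hPH
  have h2 : (D.subgroupOf P).index ∣ Nat.card P := Subgroup.index_dvd_card _
  obtain ⟨n, hc⟩ := IsPGroup.iff_card.mp hP
  rw [hc] at h2
  obtain ⟨j, _, hjj⟩ := (Nat.dvd_prime_pow hp).mp h2
  have hne1 : (D.subgroupOf P).index ≠ 1 := by
    intro htop
    exact hne (Subgroup.subgroupOf_eq_top.mp (Subgroup.index_eq_one.mp htop))
  have hdvd : p ∣ D.relIndex P := by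
    show p ∣ (D.subgroupOf P).index
    rw [hjj]
    rcases j with _ | j
    · exact absurd (by simpa using hjj) hne1
    · exact dvd_pow_self p (Nat.succ_ne_zero j)
  exact hdvd.trans ⟨P.relIndex H, h1.symm⟩

theorem stmt14_exists_pelem [Finite G] {p : ℕ} (hp : p.Prime) (D H : Subgroup G)
    (hpD : ∀ d ∈ D, d ^ p = 1) (hdvd : p ∣ D.relIndex H) :
    ∃ x, x ∈ H ∧ x ∉ D ∧ ∃ k, x ^ p ^ k = 1 := by
  haveI : Fact p.Prime := ⟨hp⟩
  have hD0 : IsPGroup p (D.subgroupOf H) := by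
    intro g
    refine ⟨1, Subtype.ext (Subtype.ext ?_)⟩
    have hm : ((g : H) : G) ∈ D := Subgroup.mem_subgroupOf.mp g.2
    have := hpD _ hm
    simpa using this
  obtain ⟨S, hS⟩ := hD0.exists_le_sylow
  by_cases hSD : (S : Subgroup H) ≤ D.subgroupOf H
  · exfalso
    have heq : D.subgroupOf H = S := le_antisymm hS hSD
    have hndvd := S.not_dvd_index
    rw [← heq] at hndvd
    exact hndvd hdvd
  · rw [SetLike.le_def] at hSD
    push_neg at hSD
    obtain ⟨x, hxS, hxD⟩ := hSD
    refine ⟨(x : G), x.2, fun hxDG => hxD (Subgroup.mem_subgroupOf.mpr hxDG), ?_⟩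
    obtain ⟨k, hk⟩ := S.2 ⟨x, hxS⟩
    exact ⟨k, by simpa using congrArg (fun z : (S : Subgroup H) => ((z : H) : G)) hk⟩

end Helpers

section Chain

theorem stmt14_chain_max {α : Type*} [Preorder α] :
    ∀ (L : List α), L ≠ [] → (∀ a ∈ L, ∀ b ∈ L, a ≤ b ∨ b ≤ a) →
      ∃ m ∈ L, ∀ a ∈ L, a ≤ m := by
  intro L
  induction L with
  | nil => intro h; exact absurd rfl h
  | cons a l ih =>
    intro _ htot
    rcases eq_or_ne l [] with rfl | hl
    · exact ⟨a, List.mem_cons_self, by simp⟩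
    · obtain ⟨m, hm, hmax⟩ := ih hl (fun x hx y hy =>
        htot x (List.mem_cons_of_mem a hx) y (List.mem_cons_of_mem a hy))
      rcases htot a (List.mem_cons_self) m (List.mem_cons_of_mem a hm) with h | h
      · refine ⟨m, List.mem_cons_of_mem a hm, ?_⟩
        intro x hx
        rcases List.mem_cons.mp hx with rfl | hx
        · exact h
        · exact hmax x hx
      · refine ⟨a, List.mem_cons_self, ?_⟩
        intro x hx
        rcases List.mem_cons.mp hx with rfl | hx
        · exact le_refl x
        · exact (hmax x hx).trans h

theorem stmt14_chain_min {α : Type*} [Preorder α] :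
    ∀ (L : List α), L ≠ [] → (∀ a ∈ L, ∀ b ∈ L, a ≤ b ∨ b ≤ a) →
      ∃ m ∈ L, ∀ a ∈ L, m ≤ a := by
  intro L hL htot
  obtain ⟨m, hm, hmax⟩ := stmt14_chain_max (α := αᵒᵈ) L hL (fun a ha b hb => (htot a ha b hb).symm)
  exact ⟨m, hm, hmax⟩

theorem stmt14_swap_stab {Ω : Type*} [DecidableEq Ω] (lam : Setoid Ω) {a b : Ω}
    (hab : lam.r a b) : ∀ x y : Ω, lam.r x y ↔ lam.r (Equiv.swap a b x) (Equiv.swap a b y) := by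
  have key : ∀ x, lam.r x (Equiv.swap a b x) := by
    intro x
    rcases eq_or_ne x a with rfl | hxa
    · rw [Equiv.swap_apply_left]; exact hab
    rcases eq_or_ne x b with rfl | hxb
    · rw [Equiv.swap_apply_right]; exact lam.symm' hab
    · rw [Equiv.swap_apply_of_ne_of_ne hxa hxb]
  intro x y
  constructor
  · intro h
    exact lam.trans' (lam.trans' (lam.symm' (key x)) h) (key y)
  · intro h
    exact lam.trans' (lam.trans' (key x) h) (lam.symm' (key y))

end Chain

def stmt14K {Ω : Type} (L : List (Setoid Ω)) : Subgroup (Equiv.Perm Ω) where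
  carrier := {g | ∀ lam ∈ L, ∀ x y : Ω, lam.r x y ↔ lam.r (g x) (g y)}
  one_mem' := by intro lam _ x y; rfl
  mul_mem' := by
    intro a b ha hb lam hl x y
    exact (hb lam hl x y).trans (ha lam hl (b x) (b y))
  inv_mem' := by
    intro a ha lam hl x y
    have h := ha lam hl (a⁻¹ x) (a⁻¹ y)
    rw [Equiv.Perm.apply_inv_self, Equiv.Perm.apply_inv_self] at h
    exact h.symm

theorem stmt14K_nil {Ω : Type} : stmt14K ([] : List (Setoid Ω)) = ⊤ := by
  ext g
  simp only [Subgroup.mem_top, iff_true]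
  intro lam hl
  exact absurd hl List.not_mem_nil


theorem stmt14_aux (p : ℕ) (hp : p.Prime) (m : ℕ) :
    ∀ (Ω : Type) [Fintype Ω] [DecidableEq Ω], Fintype.card Ω = m →
    ∀ (L : List (Setoid Ω)), (∀ lam ∈ L, ⊥ < lam ∧ lam < ⊤) →
    (∀ lam ∈ L, ∀ lam' ∈ L, lam ≤ lam' ∨ lam' ≤ lam) →
    ∀ (D : Subgroup (Equiv.Perm Ω)), D ≤ stmt14K L →
    (∀ a ∈ D, ∀ b ∈ D, a * b = b * a) → (∀ d ∈ D, d ^ p = 1) →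
    (∀ d ∈ D, d ≠ 1 → ∀ x : Ω, d x ≠ x) → (¬ ∀ x y : Ω, ∃ d ∈ D, d x = y) →
    p ∣ D.relIndex (Subgroup.centralizer (D : Set (Equiv.Perm Ω)) ⊓ stmt14K L) ∨
    (Odd p ∧ ∃ τ ∈ Subgroup.centralizer (D : Set (Equiv.Perm Ω)) ⊓ stmt14K L,
      τ ≠ 1 ∧ τ ^ 2 = 1 ∧ Equiv.Perm.sign τ = -1 ∧
      ∀ g ∈ Subgroup.normalizer (D : Set (Equiv.Perm Ω)) ⊓ stmt14K L, (∃ k : ℕ, orderOf g = p ^ k) → τ * g = g * τ) := by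
  induction m using Nat.strong_induction_on with
  | _ m IH =>
  intro Ω _ _ hcard L hproper htot D hDK hab hexp hfree hntrans
  classical
  -- the coarse relation
  set Rel : Ω → Ω → Prop := fun x y => x = y ∨ ∃ lam ∈ L, lam.r x y with hRel
  have hRelRefl : ∀ x, Rel x x := fun x => Or.inl rfl
  have hRelSymm : ∀ {x y}, Rel x y → Rel y x := by
    rintro x y (rfl | ⟨lam, hl, h⟩)
    · exact Or.inl rfl
    · exact Or.inr ⟨lam, hl, lam.symm' h⟩
  have hRelTrans : ∀ {x y z}, Rel x y → Rel y z → Rel x z := by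
    rintro x y z (rfl | ⟨lam, hl, h⟩) (rfl | ⟨lam', hl', h'⟩)
    · exact Or.inl rfl
    · exact Or.inr ⟨lam', hl', h'⟩
    · exact Or.inr ⟨lam, hl, h⟩
    · rcases htot lam hl lam' hl' with hle | hle
      · exact Or.inr ⟨lam', hl', lam'.trans' (Setoid.le_def.mp hle h) h'⟩
      · exact Or.inr ⟨lam, hl, lam.trans' h (Setoid.le_def.mp hle h')⟩
  have hKRel : ∀ g ∈ stmt14K L, ∀ x y, Rel x y ↔ Rel (g x) (g y) := by
    intro g hg x y
    constructor
    · rintro (rfl | ⟨lam, hl, h⟩)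
      · exact Or.inl rfl
      · exact Or.inr ⟨lam, hl, (hg lam hl x y).mp h⟩
    · rintro (heq | ⟨lam, hl, h⟩)
      · exact Or.inl (g.injective heq)
      · exact Or.inr ⟨lam, hl, (hg lam hl x y).mpr h⟩
  have hlamRel : ∀ lam ∈ L, ∀ x y, lam.r x y → Rel x y := fun lam hl x y h => Or.inr ⟨lam, hl, h⟩
  push_neg at hntrans
  obtain ⟨y₀, z₀, hyz₀⟩ := hntrans
  have hntrans' : ¬ ∀ x y : Ω, ∃ d ∈ D, d x = y := by
    intro hcon
    obtain ⟨d, hd, hdxy⟩ := hcon y₀ z₀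
    exact hyz₀ d hd hdxy
  by_cases hD1 : ∀ d ∈ D, d = 1
  -- ============ CASE C : trivial D ============
  · have hHeq : Subgroup.centralizer (D : Set (Equiv.Perm Ω)) ⊓ stmt14K L = stmt14K L := by
      refine le_antisymm inf_le_right (le_inf ?_ le_rfl)
      intro g hg
      rw [Subgroup.mem_centralizer_iff]
      intro d hd
      rw [hD1 d hd, one_mul, mul_one]
    set H := Subgroup.centralizer (D : Set (Equiv.Perm Ω)) ⊓ stmt14K L with hH
    by_cases hpK : p ∣ D.relIndex H
    · exact Or.inl hpK
    · -- find a pair a ≠ b with all lam.r a b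
      have hpairT : ∃ a b : Ω, a ≠ b ∧ ∀ lam ∈ L, lam.r a b := by
        rcases eq_or_ne L [] with rfl | hL
        · refine ⟨y₀, z₀, ?_, by simp⟩
          intro heq
          exact hyz₀ 1 D.one_mem (by simpa using heq)
        · obtain ⟨lmin, hlminL, hmin⟩ := stmt14_chain_min L hL htot
          have hbot : ⊥ < lmin := (hproper lmin hlminL).1
          have : ¬ (lmin ≤ ⊥) := fun hle => absurd (le_antisymm hle bot_le) (ne_of_gt hbot)
          rw [Setoid.le_def] at this
          push_neg at this
          obtain ⟨a, b, hab', hne⟩ := this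
          have hne' : a ≠ b := fun h => hne (by rw [h])
          exact ⟨a, b, hne', fun lam hl => Setoid.le_def.mp (hmin lam hl) hab'⟩
      obtain ⟨a, b, hne, hpair⟩ := hpairT
      right
      have hτK : Equiv.swap a b ∈ stmt14K L := fun lam hl => stmt14_swap_stab lam (hpair lam hl)
      have hτH : Equiv.swap a b ∈ H := by
        rw [hHeq]; exact hτK
      have hτne : Equiv.swap a b ≠ 1 := by
        intro h
        have : Equiv.swap a b a = a := by rw [h]; rfl
        rw [Equiv.swap_apply_left] at this
        exact hne this.symm
      have hτsq : Equiv.swap a b ^ 2 = 1 := by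
        rw [pow_two]; exact Equiv.swap_mul_self a b
      -- order considerations
      have hord2 : orderOf (Equiv.swap a b) = 2 := by
        refine orderOf_eq_prime ?_ hτne
        rw [pow_two]; exact Equiv.swap_mul_self a b
      have h2dvd : 2 ∣ Nat.card H := by
        rw [← hord2]
        exact Subgroup.orderOf_dvd_natCard H hτH
      have hcardrel : D.relIndex H = Nat.card H := by
        have hDbot : D.subgroupOf H = ⊥ := by
          ext g
          simp only [Subgroup.mem_bot, Subgroup.mem_subgroupOf]
          constructor
          · intro hg; exact Subtype.ext (hD1 _ hg)
          · intro hg; rw [hg]; simpa using D.one_mem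
        rw [Subgroup.relIndex, hDbot, Subgroup.index_bot]
      have hpodd : Odd p := by
        rcases hp.eq_two_or_odd' with rfl | hodd
        · exact absurd (hcardrel ▸ h2dvd) hpK
        · exact hodd
      refine ⟨hpodd, Equiv.swap a b, hτH, hτne, hτsq, Equiv.Perm.sign_swap hne, ?_⟩
      intro g hg ⟨k, hk⟩
      have hgH : g ∈ H := by rw [hHeq]; exact (Subgroup.mem_inf.mp hg).2
      have : orderOf g ∣ Nat.card H := Subgroup.orderOf_dvd_natCard H hgH
      rw [hk] at this
      rcases Nat.eq_zero_or_pos k with rfl | hkpos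
      · have : g = 1 := orderOf_eq_one_iff.mp (by rw [hk, pow_zero])
        rw [this, mul_one, one_mul]
      · exfalso
        apply hpK
        rw [hcardrel]
        exact (dvd_pow_self p hkpos.ne').trans this
  · push_neg at hD1
    obtain ⟨d₀, hd₀D, hd₀⟩ := hD1
    by_cases htr : ∀ x, ∃ d ∈ D, Rel y₀ (d⁻¹ x)
    · -- ============ CASE B ============
      rcases eq_or_ne L [] with rfl | hLne
      · exfalso
        apply hntrans'
        intro x y
        obtain ⟨dx, hdx, hx⟩ := htr x
        obtain ⟨dy, hdy, hy⟩ := htr y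
        have hx' : dx⁻¹ x = y₀ := by
          rcases hx with h | ⟨lam, hl, _⟩
          · exact h.symm
          · exact absurd hl List.not_mem_nil
        have hy' : dy⁻¹ y = y₀ := by
          rcases hy with h | ⟨lam, hl, _⟩
          · exact h.symm
          · exact absurd hl List.not_mem_nil
        refine ⟨dy * dx⁻¹, D.mul_mem hdy (D.inv_mem hdx), ?_⟩
        rw [Equiv.Perm.mul_apply, hx', ← hy', Equiv.Perm.apply_inv_self]
      have hRelneT : ∃ u w : Ω, ¬ Rel u w := by
        obtain ⟨lmax, hlmaxL, hmax⟩ := stmt14_chain_max L hLne htot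
        have htop : lmax < ⊤ := (hproper lmax hlmaxL).2
        have : ¬ ((⊤ : Setoid Ω) ≤ lmax) := fun hle => absurd (le_antisymm le_top hle) (ne_of_lt htop)
        rw [Setoid.le_def] at this
        push_neg at this
        obtain ⟨u, w, _, hne⟩ := this
        refine ⟨u, w, ?_⟩
        rintro (rfl | ⟨lam, hl, h⟩)
        · exact hne (lmax.refl' u)
        · exact hne (Setoid.le_def.mp (hmax lam hl) h)
      set Ys : Set Ω := {x | Rel y₀ x} with hYs
      set Yt := {y : Ω // y ∈ Ys} with hYt
      have hy₀Y : y₀ ∈ Ys := hRelRefl y₀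
      have hwY : ∃ w, w ∉ Ys := by
        obtain ⟨u, w, huw⟩ := hRelneT
        by_cases h1 : Rel y₀ u
        · exact ⟨w, fun h2 => huw (hRelTrans (hRelSymm h1) h2)⟩
        · exact ⟨u, h1⟩
      -- maps lemma
      have hMaps : ∀ g ∈ stmt14K L, (∃ y ∈ Ys, g y ∈ Ys) → ∀ y ∈ Ys, g y ∈ Ys := by
        rintro g hg ⟨y', hy', hgy'⟩ y hy
        exact hRelTrans hgy' ((hKRel g hg y' y).mp (hRelTrans (hRelSymm hy') hy))
      -- the quotient by Rel
      set sR : Setoid Ω := ⟨Rel, ⟨hRelRefl, hRelSymm, hRelTrans⟩⟩ with hsR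
      letI : DecidableEq (Quotient sR) := Classical.decEq _
      letI : Fintype (Quotient sR) := Fintype.ofFinite _
      set Q := Quotient sR with hQ
      have hsec : ∀ q : Q, ∃ d, d ∈ D ∧ Rel y₀ (d⁻¹ q.out) := fun q => htr q.out
      choose dQ hdQD hdQy using hsec
      have hclass : ∀ (q : Q) (x : Ω), Quotient.mk sR x = q ↔ Rel y₀ ((dQ q)⁻¹ x) := by
        intro q x
        constructor
        · intro h
          have h1 : Rel x q.out := Quotient.exact (h.trans q.out_eq.symm)
          have h2 : Rel ((dQ q)⁻¹ x) ((dQ q)⁻¹ q.out) :=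
            (hKRel (dQ q)⁻¹ ((stmt14K L).inv_mem (hDK (hdQD q))) x q.out).mp h1
          exact hRelTrans (hdQy q) (hRelSymm h2)
        · intro h
          have h2 : Rel ((dQ q)⁻¹ x) ((dQ q)⁻¹ q.out) := hRelTrans (hRelSymm h) (hdQy q)
          have h3 : Rel x q.out := by
            have := (hKRel (dQ q) (hDK (hdQD q)) _ _).mp h2
            rwa [Equiv.Perm.apply_inv_self, Equiv.Perm.apply_inv_self] at this
          exact (Quotient.sound h3).trans q.out_eq
      -- the structural equivalence
      set eqv : Q × Yt ≃ Ω :=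
        { toFun := fun qy => dQ qy.1 (qy.2 : Ω)
          invFun := fun ω => (Quotient.mk sR ω, ⟨(dQ (Quotient.mk sR ω))⁻¹ ω,
            (hclass (Quotient.mk sR ω) ω).mp rfl⟩)
          left_inv := by
            rintro ⟨q, y⟩
            have hq : Quotient.mk sR (dQ q (y : Ω)) = q :=
              (hclass q _).mpr (by rw [Equiv.Perm.inv_apply_self]; exact y.2)
            refine Prod.ext hq (Subtype.ext ?_)
            simp only [hq, Equiv.Perm.inv_apply_self]
          right_inv := by
            intro ω
            simp only [Equiv.Perm.apply_inv_self] } with heqv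
      have heqvApp : ∀ (q : Q) (y : Yt), eqv (q, y) = dQ q (y : Ω) := by
        intro q y; rw [heqv]; rfl
      have heqvSymmApp : ∀ ω : Ω, eqv.symm ω = (Quotient.mk sR ω,
          ⟨(dQ (Quotient.mk sR ω))⁻¹ ω, (hclass (Quotient.mk sR ω) ω).mp rfl⟩) := by
        intro ω; rw [heqv]; rfl
      -- matching predicate between permutations of Ys and of Ω
      set Match : Equiv.Perm Yt → Equiv.Perm Ω → Prop :=
        fun σ d => ∀ (y : Ω) (hy : y ∈ Ys), (σ ⟨y, hy⟩ : Ω) = d y with hMatch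
      have hMatchInj : ∀ σ σ' d, Match σ d → Match σ' d → σ = σ' := by
        intro σ σ' d h h'
        ext a
        have := (h a.1 a.2).trans (h' a.1 a.2).symm
        exact congrArg Subtype.val (Subtype.ext this)
      have hMatchEq : ∀ σ σ' d, Match σ d → σ = σ' → Match σ' d := by
        rintro σ σ' d h rfl; exact h
      have hMatchOne : Match 1 1 := fun y hy => rfl
      have hMatchMul : ∀ σ σ' d d', Match σ d → Match σ' d' → Match (σ * σ') (d * d') := by
        intro σ σ' d d' h h' y hy
        have h1 : σ' ⟨y, hy⟩ = ⟨d' y, by rw [← h' y hy]; exact (σ' ⟨y, hy⟩).2⟩ :=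
          Subtype.ext (h' y hy)
        calc ((σ * σ') ⟨y, hy⟩ : Ω) = (σ (σ' ⟨y, hy⟩) : Ω) := rfl
          _ = (σ ⟨d' y, _⟩ : Ω) := by rw [h1]
          _ = d (d' y) := h _ _
          _ = (d * d') y := rfl
      have hMatchInv : ∀ σ d, Match σ d → Match σ⁻¹ d⁻¹ := by
        intro σ d h y hy
        have h1 : d ((σ⁻¹ ⟨y, hy⟩ : Yt) : Ω) = y := by
          rw [← h _ (σ⁻¹ ⟨y, hy⟩).2]
          exact congrArg Subtype.val (σ.apply_inv_self ⟨y, hy⟩)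
        calc ((σ⁻¹ ⟨y, hy⟩ : Yt) : Ω) = d⁻¹ (d ((σ⁻¹ ⟨y, hy⟩ : Yt) : Ω)) := by
              rw [Equiv.Perm.inv_apply_self]
          _ = d⁻¹ y := by rw [h1]
      have hMatchPow : ∀ σ d, Match σ d → ∀ k : ℕ, Match (σ ^ k) (d ^ k) := by
        intro σ d h k
        induction k with
        | zero => simpa using hMatchOne
        | succ k ihk =>
          rw [pow_succ, pow_succ]
          exact hMatchMul _ _ _ _ ihk h
      -- restriction of suitable global permutations
      have hRestr : ∀ g : Equiv.Perm Ω, g ∈ stmt14K L → (∀ y ∈ Ys, g y ∈ Ys) →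
          ∃ σ : Equiv.Perm Yt, Match σ g := by
        intro g hg hgY
        have hiff : ∀ y : Ω, y ∈ Ys ↔ g y ∈ Ys := by
          intro y
          constructor
          · exact hgY y
          · intro hgy
            have hg'Y : ∀ z ∈ Ys, g⁻¹ z ∈ Ys := by
              refine hMaps g⁻¹ ((stmt14K L).inv_mem hg) ⟨g y₀, hgY y₀ hy₀Y, ?_⟩
              rw [Equiv.Perm.inv_apply_self]
              exact hy₀Y
            have := hg'Y (g y) hgy
            rwa [Equiv.Perm.inv_apply_self] at this
        exact ⟨g.subtypePerm (fun y => (hiff y).symm), fun y hy => rfl⟩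
      -- the subgroup D' of Perm Yt
      set D' : Subgroup (Equiv.Perm Yt) :=
        { carrier := {σ | ∃ d ∈ D, Match σ d}
          one_mem' := ⟨1, D.one_mem, hMatchOne⟩
          mul_mem' := by
            rintro σ σ' ⟨d, hd, hm⟩ ⟨d', hd', hm'⟩
            exact ⟨d * d', D.mul_mem hd hd', hMatchMul σ σ' d d' hm hm'⟩
          inv_mem' := by
            rintro σ ⟨d, hd, hm⟩
            exact ⟨d⁻¹, D.inv_mem hd, hMatchInv σ d hm⟩ } with hD'
      have hD'mem : ∀ σ : Equiv.Perm Yt, σ ∈ D' ↔ ∃ d ∈ D, Match σ d := fun σ => Iff.rfl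
      -- restricted setoids
      set resS : Setoid Ω → Setoid Yt :=
        fun s => ⟨fun a b => s.r a.1 b.1, ⟨fun a => s.refl' a.1, fun h => s.symm' h,
          fun h h' => s.trans' h h'⟩⟩ with hresS
      set L' : List (Setoid Yt) := (L.map resS).filter (fun s => decide (⊥ < s ∧ s < ⊤)) with hL'
      have hL'proper : ∀ s ∈ L', ⊥ < s ∧ s < ⊤ := by
        intro s hs
        have := (List.mem_filter.mp hs).2
        exact of_decide_eq_true this
      have hL'tot : ∀ s ∈ L', ∀ s' ∈ L', s ≤ s' ∨ s' ≤ s := by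
        intro s hs s' hs'
        obtain ⟨lam, hl, rfl⟩ := List.mem_map.mp (List.mem_filter.mp hs).1
        obtain ⟨lam', hl', rfl⟩ := List.mem_map.mp (List.mem_filter.mp hs').1
        rcases htot lam hl lam' hl' with h | h
        · exact Or.inl (fun a b hab' => Setoid.le_def.mp h hab')
        · exact Or.inr (fun a b hab' => Setoid.le_def.mp h hab')
      -- K' correspondences
      have hK'i : ∀ σ : Equiv.Perm Yt,
          (∀ lam ∈ L, ∀ a b : Yt, lam.r a.1 b.1 ↔ lam.r (σ a).1 (σ b).1) → σ ∈ stmt14K L' := by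
        intro σ h s hs a b
        obtain ⟨lam, hl, rfl⟩ := List.mem_map.mp (List.mem_filter.mp hs).1
        exact h lam hl a b
      have hK'ii : ∀ σ ∈ stmt14K L', ∀ lam ∈ L, ∀ a b : Yt,
          lam.r a.1 b.1 ↔ lam.r (σ a).1 (σ b).1 := by
        intro σ hσ lam hl a b
        by_cases hin : resS lam ∈ L'
        · exact hσ (resS lam) hin a b
        · have hnot : ¬ (⊥ < resS lam ∧ resS lam < ⊤) := by
            intro hcon
            exact hin (List.mem_filter.mpr ⟨List.mem_map.mpr ⟨lam, hl, rfl⟩, decide_eq_true hcon⟩)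
          rcases not_and_or.mp hnot with hbot | htop'
          · have heq : resS lam = ⊥ := by
              by_contra hne
              exact hbot (bot_lt_iff_ne_bot.mpr hne)
            have hrel : ∀ a b : Yt, lam.r a.1 b.1 ↔ a = b := by
              intro a b
              constructor
              · intro h
                have : (resS lam).r a b := h
                rw [heq] at this
                exact this
              · rintro rfl
                exact lam.refl' a.1
            rw [hrel a b, hrel (σ a) (σ b)]
            exact (Equiv.apply_eq_iff_eq σ).symm
          · have heq : resS lam = ⊤ := by
              by_contra hne
              exact htop' (lt_top_iff_ne_top.mpr hne)
            have hrel : ∀ a b : Yt, lam.r a.1 b.1 := by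
              intro a b
              have : (resS lam).r a b := by rw [heq]; trivial
              exact this
            exact iff_of_true (hrel a b) (hrel _ _)
      have hD'K : D' ≤ stmt14K L' := by
        rintro σ ⟨d, hd, hm⟩
        refine hK'i σ ?_
        intro lam hl a b
        rw [hm a.1 a.2, hm b.1 b.2]
        exact hDK hd lam hl a.1 b.1
      -- hypotheses of the induction for D'
      have hab' : ∀ σ ∈ D', ∀ σ' ∈ D', σ * σ' = σ' * σ := by
        rintro σ ⟨d, hd, hm⟩ σ' ⟨d', hd', hm'⟩
        refine hMatchInj _ _ (d * d') (hMatchMul _ _ _ _ hm hm') ?_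
        rw [hab d hd d' hd']
        exact hMatchMul _ _ _ _ hm' hm
      have hexp' : ∀ σ ∈ D', σ ^ p = 1 := by
        rintro σ ⟨d, hd, hm⟩
        refine hMatchInj _ _ (d ^ p) (hMatchPow _ _ hm p) ?_
        rw [hexp d hd]
        exact hMatchEq _ _ _ hMatchOne rfl
      have hfree' : ∀ σ ∈ D', σ ≠ 1 → ∀ a : Yt, σ a ≠ a := by
        rintro σ ⟨d, hd, hm⟩ hσne a hcon
        have hd1 : d ≠ 1 := by
          rintro rfl
          exact hσne (hMatchInj _ _ _ hm hMatchOne)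
        have : d a.1 = a.1 := by
          rw [← hm a.1 a.2, hcon]
        exact hfree d hd hd1 a.1 this
      have hntransY : ¬ ∀ a b : Yt, ∃ σ ∈ D', σ a = b := by
        intro hcon
        apply hntrans'
        intro ω₁ ω₂
        obtain ⟨d₁, hd₁, h₁⟩ := htr ω₁
        obtain ⟨d₂, hd₂, h₂⟩ := htr ω₂
        obtain ⟨σ, hσ, hσab⟩ := hcon ⟨d₁⁻¹ ω₁, h₁⟩ ⟨d₂⁻¹ ω₂, h₂⟩
        obtain ⟨d', hd', hm⟩ := hσ
        refine ⟨d₂ * d' * d₁⁻¹, D.mul_mem (D.mul_mem hd₂ hd') (D.inv_mem hd₁), ?_⟩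
        have : d' (d₁⁻¹ ω₁) = d₂⁻¹ ω₂ := by
          rw [← hm _ h₁, hσab]
        simp only [Equiv.Perm.mul_apply]
        rw [this, Equiv.Perm.apply_inv_self]
      -- cardinality drops
      have hcardeq : Fintype.card Q * Fintype.card Yt = m := by
        rw [← hcard, ← Fintype.card_prod]
        exact Fintype.card_congr eqv
      have hQbig : 1 < Fintype.card Q := by
        obtain ⟨w, hw⟩ := hwY
        have : (Quotient.mk sR y₀ : Q) ≠ Quotient.mk sR w := by
          intro h
          exact hw (Quotient.exact h)
        exact Fintype.one_lt_card_iff_nontrivial.mpr ⟨_, _, this⟩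
      have hYpos : 0 < Fintype.card Yt := Fintype.card_pos_iff.mpr ⟨⟨y₀, hy₀Y⟩⟩
      have hcardY : Fintype.card Yt < m := by
        calc Fintype.card Yt = 1 * Fintype.card Yt := (one_mul _).symm
          _ < Fintype.card Q * Fintype.card Yt := by
              exact (Nat.mul_lt_mul_right hYpos).mpr hQbig
          _ = m := hcardeq
      -- apply the induction hypothesis
      have hIH := IH (Fintype.card Yt) hcardY Yt rfl L' hL'proper hL'tot D' hD'K hab' hexp'
        hfree' hntransY
      -- the hat extension
      set hatP : Equiv.Perm Yt → Equiv.Perm Ω :=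
        fun σ => eqv.permCongr (Equiv.prodCongrRight (fun _ : Q => σ)) with hhatP
      have hhatApply : ∀ (σ : Equiv.Perm Yt) (q : Q) (y : Yt),
          hatP σ (dQ q (y : Ω)) = dQ q ((σ y : Yt) : Ω) := by
        intro σ q y
        rw [hhatP, ← heqvApp q y, ← heqvApp q (σ y), Equiv.permCongr_apply,
          Equiv.symm_apply_apply, Equiv.prodCongrRight_apply]
      have hhatMul : ∀ σ σ', hatP (σ * σ') = hatP σ * hatP σ' := by
        intro σ σ'
        ext ω
        rw [hhatP]
        simp only [Equiv.Perm.mul_apply, Equiv.permCongr_apply, Equiv.symm_apply_apply,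
          Equiv.prodCongrRight_apply]
        rfl
      have hhatOne : hatP 1 = 1 := by
        ext ω
        rw [hhatP]
        simp only [Equiv.permCongr_apply, Equiv.Perm.one_apply]
        have h1 : (Equiv.prodCongrRight fun _ : Q => (1 : Equiv.Perm Yt)) (eqv.symm ω)
            = eqv.symm ω := by
          rcases h : eqv.symm ω with ⟨q, y⟩
          rw [Equiv.prodCongrRight_apply]
          rfl
        rw [h1, Equiv.apply_symm_apply]
      have hhatPow : ∀ σ (k : ℕ), hatP (σ ^ k) = hatP σ ^ k := by
        intro σ k
        induction k with
        | zero => simpa using hhatOne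
        | succ k ihk => rw [pow_succ, pow_succ, hhatMul, ihk]
      -- key lemma
      have hKey : ∀ σ : Equiv.Perm Yt, σ ∈ Subgroup.centralizer (D' : Set (Equiv.Perm Yt)) →
          ∀ d ∈ D, ∀ (y : Ω) (hy : y ∈ Ys), hatP σ (d y) = d ((σ ⟨y, hy⟩ : Yt) : Ω) := by
        intro σ hσ d hd y hy
        set q : Q := Quotient.mk sR (d y) with hq
        have h1 : Rel y₀ ((dQ q)⁻¹ (d y)) := (hclass q (d y)).mp rfl
        set h' : Equiv.Perm Ω := (dQ q)⁻¹ * d with hh'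
        have hh'D : h' ∈ D := D.mul_mem (D.inv_mem (hdQD q)) hd
        have hh'y : h' y ∈ Ys := by
          show Rel y₀ (((dQ q)⁻¹ * d) y)
          simpa using h1
        obtain ⟨σh', hmh'⟩ := hRestr h' (hDK hh'D) (hMaps h' (hDK hh'D) ⟨y, hy, hh'y⟩)
        have hσh'D' : σh' ∈ D' := ⟨h', hh'D, hmh'⟩
        have hcomm : σh' * σ = σ * σh' := Subgroup.mem_centralizer_iff.mp hσ σh' hσh'D'
        have e1 : d y = dQ q (h' y) := by
          show d y = dQ q (((dQ q)⁻¹ * d) y)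
          simp
        have e2 : σh' ⟨y, hy⟩ = ⟨h' y, hh'y⟩ := Subtype.ext (hmh' y hy)
        calc hatP σ (d y) = hatP σ (dQ q (h' y)) := by rw [← e1]
          _ = dQ q ((σ (⟨h' y, hh'y⟩ : Yt) : Yt) : Ω) := hhatApply σ q ⟨h' y, hh'y⟩
          _ = dQ q ((σ (σh' ⟨y, hy⟩) : Yt) : Ω) := by rw [e2]
          _ = dQ q ((σh' (σ ⟨y, hy⟩) : Yt) : Ω) := by
              have := congrArg (fun τ : Equiv.Perm Yt => τ ⟨y, hy⟩) hcomm
              simp only [Equiv.Perm.mul_apply] at this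
              rw [this]
          _ = dQ q (h' ((σ ⟨y, hy⟩ : Yt) : Ω)) := by rw [hmh' _ (σ ⟨y, hy⟩).2]
          _ = d ((σ ⟨y, hy⟩ : Yt) : Ω) := by
              show dQ q (((dQ q)⁻¹ * d) _) = _
              simp
      -- decomposition of arbitrary points
      have hDecomp : ∀ ω : Ω, ∃ d ∈ D, ∃ hy : d⁻¹ ω ∈ Ys, ω = d (d⁻¹ ω) := by
        intro ω
        obtain ⟨d, hd, h⟩ := htr ω
        exact ⟨d, hd, h, by rw [Equiv.Perm.apply_inv_self]⟩
      -- hat lands in the centralizer of D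
      have hhatC : ∀ σ ∈ Subgroup.centralizer (D' : Set (Equiv.Perm Yt)),
          hatP σ ∈ Subgroup.centralizer (D : Set (Equiv.Perm Ω)) := by
        intro σ hσ
        rw [Subgroup.mem_centralizer_iff]
        intro e he
        ext ω
        obtain ⟨d, hd, hy, hω⟩ := hDecomp ω
        rw [hω]
        simp only [Equiv.Perm.mul_apply]
        have h1 : hatP σ (d (d⁻¹ ω)) = d ((σ ⟨d⁻¹ ω, hy⟩ : Yt) : Ω) := hKey σ hσ d hd _ hy
        have h2 : hatP σ (e (d (d⁻¹ ω))) = (e * d) ((σ ⟨d⁻¹ ω, hy⟩ : Yt) : Ω) := by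
          have := hKey σ hσ (e * d) (D.mul_mem he hd) (d⁻¹ ω) hy
          simpa using this
        rw [h1, h2]
        rfl
      -- Rel-compat of hat
      have hhatRel : ∀ σ ∈ Subgroup.centralizer (D' : Set (Equiv.Perm Yt)),
          ∀ ω : Ω, Rel ω (hatP σ ω) := by
        intro σ hσ ω
        obtain ⟨d, hd, hy, hω⟩ := hDecomp ω
        rw [hω, hKey σ hσ d hd _ hy]
        have h1 : Rel (d⁻¹ ω) ((σ ⟨d⁻¹ ω, hy⟩ : Yt) : Ω) :=
          hRelTrans (hRelSymm hy) (σ ⟨d⁻¹ ω, hy⟩).2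
        exact (hKRel d (hDK hd) _ _).mp h1
      -- hat lands in K
      have hhatK : ∀ σ, σ ∈ Subgroup.centralizer (D' : Set (Equiv.Perm Yt)) →
          σ ∈ stmt14K L' → hatP σ ∈ stmt14K L := by
        intro σ hσC hσK lam hl ω₁ ω₂
        by_cases hR : Rel ω₁ ω₂
        · obtain ⟨d₁, hd₁, hy₁, hω₁⟩ := hDecomp ω₁
          have hy₂ : d₁⁻¹ ω₂ ∈ Ys := by
            refine hRelTrans hy₁ ?_
            exact (hKRel d₁⁻¹ ((stmt14K L).inv_mem (hDK hd₁)) ω₁ ω₂).mp hR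
          have hω₂ : ω₂ = d₁ (d₁⁻¹ ω₂) := by rw [Equiv.Perm.apply_inv_self]
          have e₁ : hatP σ ω₁ = d₁ ((σ ⟨d₁⁻¹ ω₁, hy₁⟩ : Yt) : Ω) := by
            conv_lhs => rw [hω₁]
            exact hKey σ hσC d₁ hd₁ _ hy₁
          have e₂ : hatP σ ω₂ = d₁ ((σ ⟨d₁⁻¹ ω₂, hy₂⟩ : Yt) : Ω) := by
            conv_lhs => rw [hω₂]
            exact hKey σ hσC d₁ hd₁ _ hy₂
          calc lam.r ω₁ ω₂ ↔ lam.r (d₁⁻¹ ω₁) (d₁⁻¹ ω₂) := by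
                have := hDK hd₁ lam hl (d₁⁻¹ ω₁) (d₁⁻¹ ω₂)
                rw [Equiv.Perm.apply_inv_self, Equiv.Perm.apply_inv_self] at this
                exact this.symm
            _ ↔ lam.r ((σ ⟨d₁⁻¹ ω₁, hy₁⟩ : Yt) : Ω) ((σ ⟨d₁⁻¹ ω₂, hy₂⟩ : Yt) : Ω) :=
                hK'ii σ hσK lam hl ⟨d₁⁻¹ ω₁, hy₁⟩ ⟨d₁⁻¹ ω₂, hy₂⟩
            _ ↔ lam.r (hatP σ ω₁) (hatP σ ω₂) := by
                rw [e₁, e₂]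
                exact hDK hd₁ lam hl _ _
        · refine iff_of_false (fun h => hR (hlamRel lam hl _ _ h)) (fun h => hR ?_)
          have h1 : Rel (hatP σ ω₁) (hatP σ ω₂) := hlamRel lam hl _ _ h
          exact hRelTrans (hRelTrans (hhatRel σ hσC ω₁) h1) (hRelSymm (hhatRel σ hσC ω₂))
      -- if hat σ ∈ D then σ ∈ D'
      have hhatD : ∀ σ ∈ Subgroup.centralizer (D' : Set (Equiv.Perm Yt)),
          hatP σ ∈ D → σ ∈ D' := by
        intro σ hσC hin
        refine ⟨hatP σ, hin, ?_⟩
        intro y hy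
        have := hKey σ hσC 1 D.one_mem y hy
        simpa using this.symm
      have hhatNe : ∀ σ ∈ Subgroup.centralizer (D' : Set (Equiv.Perm Yt)), σ ≠ 1 → hatP σ ≠ 1 := by
        intro σ hσC hσne hcon
        apply hσne
        ext a
        have h1 := hKey σ hσC 1 D.one_mem a.1 a.2
        rw [hcon] at h1
        simpa using h1.symm
      -- sign of hat
      have hhatSign : ∀ σ, Equiv.Perm.sign (hatP σ) = Equiv.Perm.sign σ ^ Fintype.card Q := by
        intro σ
        rw [hhatP]
        rw [show (fun σ : Equiv.Perm Yt => eqv.permCongr (Equiv.prodCongrRight (fun _ : Q => σ))) σ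
          = eqv.permCongr (Equiv.prodCongrRight (fun _ : Q => σ)) from rfl]
        rw [Equiv.Perm.sign_permCongr, Equiv.Perm.sign_prodCongrRight]
        simp [Finset.prod_const, Finset.card_univ]
      -- cardinality of Q is an odd prime power when p is odd
      have hDp : IsPGroup p D := by
        intro g
        exact ⟨1, Subtype.ext (by rw [pow_one]; exact hexp g.1 g.2)⟩
      haveI : Fact p.Prime := ⟨hp⟩
      obtain ⟨aD, hcardD⟩ := IsPGroup.iff_card.mp hDp
      -- D acts on Q, transitively
      letI actQ : MulAction D Q :=
        { smul := fun d q => Quotient.map' (fun x => (d : Equiv.Perm Ω) x)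
            (fun x y h => (hKRel (d : Equiv.Perm Ω) (hDK d.2) x y).mp h) q
          one_smul := by
            intro q
            refine Quotient.inductionOn' q (fun x => ?_)
            show Quotient.map' _ _ (Quotient.mk'' x) = Quotient.mk'' x
            rw [Quotient.map'_mk'']
            simp
          mul_smul := by
            intro d e q
            refine Quotient.inductionOn' q (fun x => ?_)
            show Quotient.map' _ _ (Quotient.mk'' x)
              = Quotient.map' _ _ (Quotient.map' _ _ (Quotient.mk'' x))
            rw [Quotient.map'_mk'', Quotient.map'_mk'', Quotient.map'_mk'']
            simp }
      have hsmulmk : ∀ (d : D) (x : Ω),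
          d • (Quotient.mk sR x : Q) = Quotient.mk sR ((d : Equiv.Perm Ω) x) := by
        intro d x
        show Quotient.map' _ _ (Quotient.mk'' x) = _
        rw [Quotient.map'_mk'']
      have hQtrans : ∀ q : Q, q ∈ MulAction.orbit D (Quotient.mk sR y₀ : Q) := by
        intro q
        obtain ⟨d, hd, h⟩ := htr q.out
        refine ⟨⟨d, hd⟩, ?_⟩
        show (⟨d, hd⟩ : D) • (Quotient.mk sR y₀ : Q) = q
        rw [hsmulmk]
        have h1 : Rel (d y₀) q.out := by
          have := (hKRel d (hDK hd) y₀ (d⁻¹ q.out)).mp h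
          rwa [Equiv.Perm.apply_inv_self] at this
        exact (Quotient.sound h1).trans q.out_eq
      have hcardQdvd : Nat.card Q ∣ Nat.card D := by
        have e1 : Nat.card Q = Nat.card (MulAction.orbit D (Quotient.mk sR y₀ : Q)) := by
          rw [Set.eq_univ_of_forall hQtrans]
          exact (Nat.card_congr (Equiv.Set.univ Q)).symm
        rw [e1, Nat.card_congr (MulAction.orbitEquivQuotientStabilizer D _),
          ← Subgroup.index_eq_card]
        exact Subgroup.index_dvd_card _
      rw [hcardD] at hcardQdvd
      obtain ⟨bQ, _, hcardQ⟩ := (Nat.dvd_prime_pow hp).mp hcardQdvd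
      -- split on the induction conclusion
      rcases hIH with hdvd' | ⟨hpodd, τ', hτ'mem, hτ'ne, hτ'sq, hτ'sign, hτ'comm⟩
      · -- transfer divisibility: extract a p-element, extend it, enlarge the p-group
        obtain ⟨x', hx'H, hx'nD, k, hx'pow⟩ :=
          stmt14_exists_pelem hp D' (Subgroup.centralizer (D' : Set (Equiv.Perm Yt)) ⊓ stmt14K L')
            hexp' hdvd'
        obtain ⟨hx'C, hx'K⟩ := Subgroup.mem_inf.mp hx'H
        have hxhat_pow : hatP x' ^ p ^ k = 1 := by
          rw [← hhatPow, hx'pow, hhatOne]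
        have hxhatC : hatP x' ∈ Subgroup.centralizer (D : Set (Equiv.Perm Ω)) := hhatC x' hx'C
        have hxhatK : hatP x' ∈ stmt14K L := hhatK x' hx'C hx'K
        have hxhatnD : hatP x' ∉ D := fun hin => hx'nD (hhatD x' hx'C hin)
        set S : Set (Equiv.Perm Ω) := (D : Set (Equiv.Perm Ω)) ∪ {hatP x'} with hSdef
        have hScomm : ∀ a ∈ S, ∀ b ∈ S, a * b = b * a := by
          rintro a (ha | ha) b (hb | hb)
          · exact hab a ha b hb
          · rw [Set.mem_singleton_iff] at hb; subst hb
            exact (Subgroup.mem_centralizer_iff.mp hxhatC a ha)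
          · rw [Set.mem_singleton_iff] at ha; subst ha
            exact (Subgroup.mem_centralizer_iff.mp hxhatC b hb).symm
          · rw [Set.mem_singleton_iff] at ha hb; subst ha; subst hb; rfl
        have hSpow : ∀ a ∈ S, ∃ j, a ^ p ^ j = 1 := by
          rintro a (ha | ha)
          · exact ⟨1, by rw [pow_one]; exact hexp a ha⟩
          · rw [Set.mem_singleton_iff] at ha; subst ha
            exact ⟨k, hxhat_pow⟩
        have hPgrp : IsPGroup p (Subgroup.closure S) := stmt14_pgroup_closure S hScomm hSpow
        have hDP : D ≤ Subgroup.closure S := fun d hd => Subgroup.subset_closure (Or.inl hd)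
        have hnPD : ¬ Subgroup.closure S ≤ D :=
          fun hle => hxhatnD (hle (Subgroup.subset_closure (Or.inr rfl)))
        have hPH : Subgroup.closure S ≤
            Subgroup.centralizer (D : Set (Equiv.Perm Ω)) ⊓ stmt14K L := by
          rw [Subgroup.closure_le]
          rintro a (ha | ha)
          · refine ⟨Subgroup.mem_centralizer_iff.mpr (fun b hb => hab b hb a ha), hDK ha⟩
          · rw [Set.mem_singleton_iff] at ha; subst ha
            exact ⟨hxhatC, hxhatK⟩
        exact Or.inl (stmt14_dvd_relIndex hp D (Subgroup.closure S) _ hDP hPH hnPD hPgrp)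
      · -- transfer the involution
        obtain ⟨hτ'C, hτ'K⟩ := Subgroup.mem_inf.mp hτ'mem
        refine Or.inr ⟨hpodd, hatP τ', Subgroup.mem_inf.mpr ⟨hhatC τ' hτ'C, hhatK τ' hτ'C hτ'K⟩,
          hhatNe τ' hτ'C hτ'ne, ?_, ?_, ?_⟩
        · rw [← hhatPow, hτ'sq, hhatOne]
        · rw [hhatSign, hτ'sign]
          have hoddQ : Odd (Fintype.card Q) := by
            rw [← Nat.card_eq_fintype_card, hcardQ]
            exact hpodd.pow
          exact hoddQ.neg_one_pow
        · -- commuting with p-power elements of the normalizer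
          intro g hg ⟨k, hgord⟩
          obtain ⟨hgN, hgK⟩ := Subgroup.mem_inf.mp hg
          ext ω
          obtain ⟨d, hd, hy, hω⟩ := hDecomp ω
          rw [hω]
          simp only [Equiv.Perm.mul_apply]
          -- the class of g (d (d⁻¹ ω))
          obtain ⟨d₂, hd₂, h₂⟩ := htr (g (d (d⁻¹ ω)))
          set y : Ω := d⁻¹ ω with hydef
          set h : Equiv.Perm Ω := d₂⁻¹ * g * d with hhdef
          have hhy : h y ∈ Ys := by
            show Rel y₀ ((d₂⁻¹ * g * d) y)
            have : (d₂⁻¹ * g * d) y = d₂⁻¹ (g (d y)) := by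
              simp [Equiv.Perm.mul_apply]
            rw [this]
            exact h₂
          have hhK : h ∈ stmt14K L :=
            (stmt14K L).mul_mem ((stmt14K L).mul_mem ((stmt14K L).inv_mem (hDK hd₂)) hgK)
              (hDK hd)
          obtain ⟨σh, hmσh⟩ := hRestr h hhK (hMaps h hhK ⟨y, hy, hhy⟩)
          -- σh is in the normalizer of D'
          have hDconj : ∀ x ∈ D, h * x * h⁻¹ ∈ D := by
            intro x hx
            have e : h * x * h⁻¹ = d₂⁻¹ * (g * (d * x * d⁻¹) * g⁻¹) * d₂ := by
              rw [hhdef]; group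
            rw [e]
            have h1 : d * x * d⁻¹ ∈ D := D.mul_mem (D.mul_mem hd hx) (D.inv_mem hd)
            have h2 : g * (d * x * d⁻¹) * g⁻¹ ∈ D :=
              (Subgroup.mem_normalizer_iff.mp hgN _).mp h1
            exact D.mul_mem (D.mul_mem (D.inv_mem hd₂) h2) hd₂
          have hDconj' : ∀ x ∈ D, h⁻¹ * x * h ∈ D := by
            intro x hx
            have e : h⁻¹ * x * h = d⁻¹ * (g⁻¹ * (d₂ * x * d₂⁻¹) * g) * d := by
              rw [hhdef]; group
            rw [e]
            have h1 : d₂ * x * d₂⁻¹ ∈ D := D.mul_mem (D.mul_mem hd₂ hx) (D.inv_mem hd₂)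
            have h2 : g⁻¹ * (d₂ * x * d₂⁻¹) * g ∈ D := by
              have := (Subgroup.mem_normalizer_iff.mp hgN (g⁻¹ * (d₂ * x * d₂⁻¹) * g)).mpr
              apply this
              have e2 : g * (g⁻¹ * (d₂ * x * d₂⁻¹) * g) * g⁻¹ = d₂ * x * d₂⁻¹ := by group
              rw [e2]
              exact h1
            exact D.mul_mem (D.mul_mem (D.inv_mem hd) h2) hd
          have hσhN : σh ∈ Subgroup.normalizer (D' : Set (Equiv.Perm Yt)) := by
            rw [Subgroup.mem_normalizer_iff]
            intro σ
            constructor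
            · rintro ⟨x, hx, hmx⟩
              exact ⟨h * x * h⁻¹, hDconj x hx,
                hMatchMul _ _ _ _ (hMatchMul _ _ _ _ hmσh hmx) (hMatchInv _ _ hmσh)⟩
            · rintro ⟨x, hx, hmx⟩
              have e : σ = σh⁻¹ * (σh * σ * σh⁻¹) * σh := by group
              rw [e]
              refine ⟨h⁻¹ * x * h, hDconj' x hx,
                hMatchMul _ _ _ _ (hMatchMul _ _ _ _ (hMatchInv _ _ hmσh) hmx) hmσh⟩
          have hσhK : σh ∈ stmt14K L' := by
            refine hK'i σh ?_
            intro lam hl a b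
            rw [hmσh a.1 a.2, hmσh b.1 b.2]
            exact hhK lam hl a.1 b.1
          -- σh has p-power order
          have hhP2 : h ∈ D ⊔ Subgroup.zpowers g := by
            refine Subgroup.mul_mem _ (Subgroup.mul_mem _ ?_ ?_) ?_
            · exact Subgroup.mem_sup_left (D.inv_mem hd₂)
            · exact Subgroup.mem_sup_right (Subgroup.mem_zpowers g)
            · exact Subgroup.mem_sup_left hd
          have hP2p : IsPGroup p (D ⊔ Subgroup.zpowers g : Subgroup (Equiv.Perm Ω)) := by
            refine IsPGroup.to_sup_of_normal_left' hDp ?_ ?_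
            · exact IsPGroup.iff_card.mpr ⟨k, by rw [Nat.card_zpowers, hgord]⟩
            · exact Subgroup.zpowers_le.mpr hgN
          obtain ⟨k₂, hk₂⟩ := hP2p ⟨h, hhP2⟩
          have hk₂' : h ^ p ^ k₂ = 1 := by
            have := congrArg (fun z : (D ⊔ Subgroup.zpowers g : Subgroup (Equiv.Perm Ω)) =>
              (z : Equiv.Perm Ω)) hk₂
            simpa using this
          have hσhpow : σh ^ p ^ k₂ = 1 := by
            refine hMatchInj _ _ (h ^ p ^ k₂) (hMatchPow _ _ hmσh _) ?_
            rw [hk₂']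
            exact hMatchOne
          obtain ⟨j, _, hj⟩ := (Nat.dvd_prime_pow hp).mp (orderOf_dvd_of_pow_eq_one hσhpow)
          have hcomm : τ' * σh = σh * τ' :=
            hτ'comm σh (Subgroup.mem_inf.mpr ⟨hσhN, hσhK⟩) ⟨j, hj⟩
          -- final computation
          have e1 : g (d y) = d₂ (h y) := by
            rw [hhdef]
            simp [Equiv.Perm.mul_apply]
          have e2 : σh ⟨y, hy⟩ = ⟨h y, hhy⟩ := Subtype.ext (hmσh y hy)
          have e3 : τ' (σh ⟨y, hy⟩) = σh (τ' ⟨y, hy⟩) := by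
            have := congrArg (fun τ : Equiv.Perm Yt => τ ⟨y, hy⟩) hcomm
            simpa [Equiv.Perm.mul_apply] using this
          calc hatP τ' (g (d y)) = hatP τ' (d₂ (h y)) := by rw [e1]
            _ = d₂ ((τ' (⟨h y, hhy⟩ : Yt) : Yt) : Ω) := hKey τ' hτ'C d₂ hd₂ _ hhy
            _ = d₂ ((σh (τ' ⟨y, hy⟩) : Yt) : Ω) := by rw [← e2, e3]
            _ = d₂ (h ((τ' ⟨y, hy⟩ : Yt) : Ω)) := by rw [hmσh _ (τ' ⟨y, hy⟩).2]
            _ = g (d ((τ' ⟨y, hy⟩ : Yt) : Ω)) := by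
                have e4 : d₂ * h = g * d := by rw [hhdef]; group
                have := congrArg (fun τ : Equiv.Perm Ω => τ ((τ' ⟨y, hy⟩ : Yt) : Ω)) e4
                simpa [Equiv.Perm.mul_apply] using this
            _ = g (hatP τ' (d y)) := by rw [hKey τ' hτ'C d hd y hy]

    · -- ============ CASE A ============
      push_neg at htr
      obtain ⟨z, hz⟩ := htr
      set U : Set Ω := {x | ∃ d ∈ D, Rel y₀ (d⁻¹ x)} with hU
      have hUy₀ : y₀ ∈ U := ⟨1, D.one_mem, by simpa using hRelRefl y₀⟩
      have hzU : z ∉ U := by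
        rintro ⟨d, hd, h⟩
        exact hz d hd h
      have hUinv : ∀ e ∈ D, ∀ ω, ω ∈ U → e ω ∈ U := by
        rintro e he ω ⟨d, hd, h⟩
        refine ⟨e * d, D.mul_mem he hd, ?_⟩
        have : (e * d)⁻¹ (e ω) = d⁻¹ ω := by
          simp [mul_inv_rev, Equiv.Perm.mul_apply]
        rw [this]; exact h
      have hUinv' : ∀ e ∈ D, ∀ ω, e ω ∈ U → ω ∈ U := by
        intro e he ω h
        have := hUinv e⁻¹ (D.inv_mem he) (e ω) h
        simpa using this
      have hUsat : ∀ ω ∈ U, ∀ ω', Rel ω ω' → ω' ∈ U := by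
        rintro ω ⟨d, hd, h⟩ ω' hrel
        refine ⟨d, hd, hRelTrans h ?_⟩
        exact (hKRel d⁻¹ ((stmt14K L).inv_mem (hDK hd)) ω ω').mp hrel
      -- the permutation f = d₀ on U, identity elsewhere
      set f : Equiv.Perm Ω :=
        { toFun := fun ω => if ω ∈ U then d₀ ω else ω
          invFun := fun ω => if ω ∈ U then d₀⁻¹ ω else ω
          left_inv := by
            intro ω
            by_cases hω : ω ∈ U
            · simp only [hω, if_pos, hUinv d₀ hd₀D ω hω, Equiv.Perm.inv_apply_self]
            · simp only [hω, if_neg, if_false]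
          right_inv := by
            intro ω
            by_cases hω : ω ∈ U
            · have h1 : d₀⁻¹ ω ∈ U := hUinv' d₀ hd₀D (d₀⁻¹ ω) (by simpa using hω)
              simp only [hω, if_pos, h1, Equiv.Perm.apply_inv_self]
            · simp only [hω, if_neg, if_false] } with hf
      have hfapp : ∀ ω ∈ U, f ω = d₀ ω := by
        intro ω hω; simp only [hf, Equiv.coe_fn_mk, if_pos hω]
      have hfapp' : ∀ ω ∉ U, f ω = ω := by
        intro ω hω; simp only [hf, Equiv.coe_fn_mk, if_neg hω]
      have hfK : f ∈ stmt14K L := by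
        intro lam hl ω₁ ω₂
        by_cases h1 : ω₁ ∈ U <;> by_cases h2 : ω₂ ∈ U
        · rw [hfapp ω₁ h1, hfapp ω₂ h2]
          exact hDK hd₀D lam hl ω₁ ω₂
        · refine iff_of_false (fun h => h2 (hUsat ω₁ h1 ω₂ (hlamRel lam hl _ _ h))) ?_
          rw [hfapp ω₁ h1, hfapp' ω₂ h2]
          intro h
          exact h2 (hUsat (d₀ ω₁) (hUinv d₀ hd₀D ω₁ h1) ω₂ (hlamRel lam hl _ _ h))
        · refine iff_of_false (fun h => h1 (hUsat ω₂ h2 ω₁ (hlamRel lam hl _ _ (lam.symm' h)))) ?_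
          rw [hfapp' ω₁ h1, hfapp ω₂ h2]
          intro h
          exact h1 (hUsat (d₀ ω₂) (hUinv d₀ hd₀D ω₂ h2) ω₁ (hlamRel lam hl _ _ (lam.symm' h)))
        · rw [hfapp' ω₁ h1, hfapp' ω₂ h2]
      have hfC : ∀ e ∈ D, e * f = f * e := by
        intro e he
        ext ω
        simp only [Equiv.Perm.mul_apply]
        by_cases hω : ω ∈ U
        · rw [hfapp ω hω, hfapp (e ω) (hUinv e he ω hω)]
          have := hab e he d₀ hd₀D
          calc e (d₀ ω) = (e * d₀) ω := rfl
            _ = (d₀ * e) ω := by rw [this]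
            _ = d₀ (e ω) := rfl
        · rw [hfapp' ω hω, hfapp' (e ω) (fun h => hω (hUinv' e he ω h))]
      have hfne1 : f ≠ 1 := by
        intro h1
        have : f y₀ = y₀ := by rw [h1]; rfl
        rw [hfapp y₀ hUy₀] at this
        exact hfree d₀ hd₀D hd₀ y₀ this
      have hfnD : f ∉ D := by
        intro hfD
        exact hfree f hfD hfne1 z (hfapp' z hzU)
      have hfpow : ∀ k : ℕ, ∀ ω ∈ U, (f ^ k) ω = (d₀ ^ k) ω := by
        intro k
        induction k with
        | zero => intro ω _; simp
        | succ k ihk =>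
          intro ω hω
          rw [pow_succ, pow_succ]
          simp only [Equiv.Perm.mul_apply]
          rw [hfapp ω hω]
          exact ihk (d₀ ω) (hUinv d₀ hd₀D ω hω)
      have hfp : f ^ p = 1 := by
        ext ω
        by_cases hω : ω ∈ U
        · rw [hfpow p ω hω, hexp d₀ hd₀D]
        · have hfix : ∀ k : ℕ, (f ^ k) ω = ω := by
            intro k
            induction k with
            | zero => simp
            | succ k ihk =>
              rw [pow_succ, Equiv.Perm.mul_apply, hfapp' ω hω, ihk]
          rw [hfix p]; rfl
      -- build the p-group P = <D, f>
      set S : Set (Equiv.Perm Ω) := (D : Set (Equiv.Perm Ω)) ∪ {f} with hS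
      have hScomm : ∀ a ∈ S, ∀ b ∈ S, a * b = b * a := by
        rintro a (ha | ha) b (hb | hb)
        · exact hab a ha b hb
        · rw [Set.mem_singleton_iff] at hb; subst hb
          exact (hfC a ha).symm.symm ▸ (hfC a ha)
        · rw [Set.mem_singleton_iff] at ha; subst ha
          exact (hfC b hb).symm
        · rw [Set.mem_singleton_iff] at ha hb; subst ha; subst hb; rfl
      have hSpow : ∀ a ∈ S, ∃ k, a ^ p ^ k = 1 := by
        rintro a (ha | ha)
        · exact ⟨1, by rw [pow_one]; exact hexp a ha⟩
        · rw [Set.mem_singleton_iff] at ha; subst ha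
          exact ⟨1, by rw [pow_one]; exact hfp⟩
      have hPgrp : IsPGroup p (Subgroup.closure S) := stmt14_pgroup_closure S hScomm hSpow
      have hDP : D ≤ Subgroup.closure S := by
        intro d hd
        exact Subgroup.subset_closure (Or.inl hd)
      have hfP : f ∈ Subgroup.closure S := Subgroup.subset_closure (Or.inr rfl)
      have hnPD : ¬ Subgroup.closure S ≤ D := fun hle => hfnD (hle hfP)
      have hPH : Subgroup.closure S ≤ Subgroup.centralizer (D : Set (Equiv.Perm Ω)) ⊓ stmt14K L := by
        rw [Subgroup.closure_le]
        rintro a (ha | ha)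
        · refine ⟨Subgroup.mem_centralizer_iff.mpr ?_, hDK ha⟩
          intro b hb
          exact hab b hb a ha
        · rw [Set.mem_singleton_iff] at ha; subst ha
          refine ⟨Subgroup.mem_centralizer_iff.mpr ?_, hfK⟩
          intro b hb
          exact hfC b hb
      exact Or.inl (stmt14_dvd_relIndex hp D (Subgroup.closure S) _ hDP hPH hnPD hPgrp)

/-- Let `K ≤ Σ_n` be either `Σ_n` itself or the stabilizer of a
strictly increasing chain of proper nontrivial setoids on `Fin n`, and let `D ≤ K` be
an elementary abelian `p`-subgroup acting freely and not transitively on `Fin n`, with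
centralizer `C` and normalizer `N` in `K`.  Then either `p` divides `[C : D]`, or `p`
is odd and there is an odd involution `τ ∈ C` commuting with every element of `N` of
`p`-power order. -/
theorem stmt14 (p n : ℕ) (hp : p.Prime)
    (K : Subgroup (Equiv.Perm (Fin n)))
    (hK : K = ⊤ ∨ ∃ (j : ℕ) (lam : Fin (j + 1) → Setoid (Fin n)),
      StrictMono lam ∧ (∀ t, ⊥ < lam t ∧ lam t < ⊤) ∧
      ∀ g, g ∈ K ↔ ∀ (t : Fin (j + 1)) (x y : Fin n),
        (lam t).r x y ↔ (lam t).r (g x) (g y))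
    (D : Subgroup (Equiv.Perm (Fin n))) (hDK : D ≤ K)
    (hab : ∀ a ∈ D, ∀ b ∈ D, a * b = b * a)
    (hexp : ∀ d ∈ D, d ^ p = 1)
    (hfree : ∀ d ∈ D, d ≠ 1 → ∀ x : Fin n, d x ≠ x)
    (hntrans : ¬ ∀ x y : Fin n, ∃ d ∈ D, d x = y) :
    p ∣ D.relIndex (Subgroup.centralizer (D : Set (Equiv.Perm (Fin n))) ⊓ K) ∨
    (Odd p ∧ ∃ τ ∈ Subgroup.centralizer (D : Set (Equiv.Perm (Fin n))) ⊓ K,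
      τ ≠ 1 ∧ τ ^ 2 = 1 ∧ Equiv.Perm.sign τ = -1 ∧
      ∀ g ∈ Subgroup.normalizer (D : Set (Equiv.Perm (Fin n))) ⊓ K, (∃ k : ℕ, orderOf g = p ^ k) → τ * g = g * τ) := by
  rcases hK with rfl | ⟨j, lam, hmono, hproper, hmem⟩
  · have h := stmt14_aux p hp n (Fin n) (Fintype.card_fin n) [] (by simp) (by simp) D
      (by rw [stmt14K_nil]; exact le_top) hab hexp hfree hntrans
    rwa [stmt14K_nil] at h
  · have hKeq : K = stmt14K (List.ofFn lam) := by
      ext g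
      rw [hmem g]
      constructor
      · intro h lam' hl'
        obtain ⟨t, rfl⟩ := List.mem_ofFn.mp hl'
        exact h t
      · intro h t
        exact h (lam t) (List.mem_ofFn.mpr ⟨t, rfl⟩)
    rw [hKeq] at hDK ⊢
    exact stmt14_aux p hp n (Fin n) (Fintype.card_fin n) (List.ofFn lam)
      (by
        intro l hl
        obtain ⟨t, rfl⟩ := List.mem_ofFn.mp hl
        exact hproper t)
      (by
        intro l hl l' hl'
        obtain ⟨t, rfl⟩ := List.mem_ofFn.mp hl
        obtain ⟨t', rfl⟩ := List.mem_ofFn.mp hl'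
        rcases le_total t t' with h | h
        · exact Or.inl (hmono.monotone h)
        · exact Or.inr (hmono.monotone h))
      D hDK hab hexp hfree hntrans
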